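/- For every real number x ≤ 1, exp(x) ≤ 1 + x + (e − 2)·x², where e is Euler's number. -/

import Mathlib

open Real

lemma exp_tsum (y : ℝ) : Real.exp y = ∑' n : ℕ, y ^ n / n.factorial := by
  rw [Real.exp_eq_exp_ℝ, NormedSpace.exp_eq_tsum_div]

lemma exp_shift (y : ℝ) :
    Real.exp y = 1 + y + ∑' n : ℕ, y ^ (n + 2) / (n + 2).factorial := by
  have hs := Real.summable_pow_div_factorial y
  have h1 : Summable (fun n : ℕ => y ^ (n + 1) / (n + 1).factorial) :=
    (summable_nat_add_iff 1).2 hs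
  rw [exp_tsum, hs.tsum_eq_zero_add, h1.tsum_eq_zero_add]
  simp [Nat.factorial]
  ring

lemma quad_le_exp (y : ℝ) (hy : 0 ≤ y) : 1 + y + y ^ 2 / 2 ≤ Real.exp y := by
  have hs : Summable (fun n : ℕ => y ^ (n + 2) / (n + 2).factorial) :=
    (summable_nat_add_iff (f := fun n : ℕ => y ^ n / n.factorial) 2).2
      (Real.summable_pow_div_factorial y)
  have h0 : y ^ (0 + 2) / (0 + 2).factorial ≤ ∑' n : ℕ, y ^ (n + 2) / (n + 2).factorial :=
    hs.le_tsum 0 (fun j _ => by positivity)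
  rw [exp_shift y]
  have : y ^ (0 + 2) / ((0 + 2).factorial : ℝ) = y ^ 2 / 2 := by norm_num [Nat.factorial]
  linarith [this ▸ h0]

theorem exp_le_one_add_add_sq (x : ℝ) (hx : x ≤ 1) :
    Real.exp x ≤ 1 + x + (Real.exp 1 - 2) * x ^ 2 := by
  have he : Real.exp 1 - 2 = ∑' n : ℕ, (1:ℝ) ^ (n + 2) / (n + 2).factorial := by
    rw [exp_shift 1]; ring
  rcases le_or_gt 0 x with h0 | h0
  · rw [exp_shift x, he]
    have hs2 : Summable (fun n : ℕ => x ^ (n + 2) / (n + 2).factorial) :=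
      (summable_nat_add_iff (f := fun n : ℕ => x ^ n / n.factorial) 2).2
        (Real.summable_pow_div_factorial x)
    have hs1 : Summable (fun n : ℕ => (1:ℝ) ^ (n + 2) / (n + 2).factorial) :=
      (summable_nat_add_iff (f := fun n : ℕ => (1:ℝ) ^ n / n.factorial) 2).2
        (Real.summable_pow_div_factorial 1)
    have hrw : (∑' n : ℕ, (1:ℝ) ^ (n + 2) / (n + 2).factorial) * x ^ 2
        = ∑' n : ℕ, x ^ 2 * ((1:ℝ) ^ (n + 2) / (n + 2).factorial) := by
      rw [tsum_mul_left]; ring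
    rw [hrw]
    refine add_le_add le_rfl ?_
    refine hs2.tsum_le_tsum (fun n => ?_) (hs1.mul_left _)
    simp only [one_pow, mul_one_div]
    have hnum : x ^ (n + 2) ≤ x ^ 2 := by
      rw [pow_add]
      calc x ^ n * x ^ 2 ≤ 1 * x ^ 2 :=
            mul_le_mul_of_nonneg_right (pow_le_one₀ h0 hx) (sq_nonneg x)
        _ = x ^ 2 := one_mul _
    have hfac : (0:ℝ) ≤ (n + 2).factorial := by positivity
    exact div_le_div_of_nonneg_right hnum hfac
  · have hy : 0 ≤ -x := by linarith
    have hlow := quad_le_exp (-x) hy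
    have hprod : Real.exp x * Real.exp (-x) = 1 := by
      rw [← Real.exp_add]; simp
    have hq2 : (0:ℝ) ≤ 1 + x + x ^ 2 / 2 := by nlinarith [sq_nonneg (x + 1)]
    have hmul := mul_le_mul_of_nonneg_left hlow hq2
    have hxq : Real.exp x ≤ 1 + x + x ^ 2 / 2 := by
      nlinarith [hmul, hprod, Real.exp_pos (-x), sq_nonneg (x ^ 2)]
    have h2 : (5:ℝ)/2 ≤ Real.exp 1 := by
      nlinarith [Real.exp_one_gt_d9]
    nlinarith [sq_nonneg x]
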